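/- An invertible real n×n matrix P that has −1 as an eigenvalue with geometric multiplicity exactly 1 is not the exponential of any real n×n matrix. -/

import Mathlib

open NormedSpace Matrix Nat
open scoped Matrix

attribute [local instance] Matrix.linftyOpNormedAddCommGroup Matrix.linftyOpNormedRing
  Matrix.linftyOpNormedAlgebra

/-- If `v` is an eigenvector of `M` with eigenvalue `c`, then it is an eigenvector of
`exp ℝ M` with eigenvalue `Real.exp c`. -/
lemma exp_mulVec_eigen {n : ℕ} (M : Matrix (Fin n) (Fin n) ℝ) (v : Fin n → ℝ) (c : ℝ)
    (hv : M *ᵥ v = c • v) : NormedSpace.exp M *ᵥ v = Real.exp c • v := by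
  have hpow : ∀ k : ℕ, M ^ k *ᵥ v = c ^ k • v := by
    intro k
    induction k with
    | zero => simp
    | succ k ih =>
      rw [pow_succ, ← Matrix.mulVec_mulVec, hv, Matrix.mulVec_smul, ih, smul_smul]
      congr 1
      ring
  -- linear map `A ↦ A *ᵥ v`, as a continuous linear map
  let L : Matrix (Fin n) (Fin n) ℝ →ₗ[ℝ] (Fin n → ℝ) :=
    { toFun := fun A => A *ᵥ v
      map_add' := fun A B => Matrix.add_mulVec A B v
      map_smul' := fun r A => by simp [Matrix.smul_mulVec] }
  let Lc : Matrix (Fin n) (Fin n) ℝ →L[ℝ] (Fin n → ℝ) := L.toContinuousLinearMap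
  have hsum : Summable fun k : ℕ => ((k ! : ℝ)⁻¹) • M ^ k :=
    NormedSpace.expSeries_summable' (𝕂 := ℝ) M
  have h1 : NormedSpace.exp M *ᵥ v = ∑' k : ℕ, ((k ! : ℝ)⁻¹) • (M ^ k *ᵥ v) := by
    have := Lc.map_tsum hsum
    simpa [Lc, L, NormedSpace.exp_eq_tsum ℝ] using this
  rw [h1]
  have h2 : ∀ k : ℕ, ((k ! : ℝ)⁻¹) • (M ^ k *ᵥ v) = (((k ! : ℝ)⁻¹) * c ^ k) • v := by
    intro k; rw [hpow k, smul_smul]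
  simp_rw [h2]
  rw [Summable.tsum_smul_const]
  · congr 1
    rw [Real.exp_eq_exp_ℝ, NormedSpace.exp_eq_tsum ℝ]
    simp [smul_eq_mul]
  · simpa [smul_eq_mul] using NormedSpace.expSeries_summable' (𝕂 := ℝ) (𝔸 := ℝ) c

/-- An invertible real matrix having `-1` as an eigenvalue of geometric multiplicity
exactly one is not the exponential of any real matrix. -/
theorem not_exp_of_neg_one_geom_mult_one (n : ℕ) (P : Matrix (Fin n) (Fin n) ℝ)
    (hP : IsUnit P) (hmult : n - (P + 1).rank = 1) :
    ¬ ∃ M : Matrix (Fin n) (Fin n) ℝ, NormedSpace.exp M = P := by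
  rintro ⟨M, rfl⟩
  set P := NormedSpace.exp M
  set Q := P + 1 with hQ
  -- the kernel of Q has dimension 1
  have hrank_le : Q.rank ≤ n := by simpa using Q.rank_le_card_width
  have hrn : Module.finrank ℝ (LinearMap.range Q.mulVecLin)
      + Module.finrank ℝ (LinearMap.ker Q.mulVecLin) = n := by
    simpa using LinearMap.finrank_range_add_finrank_ker Q.mulVecLin
  have hker : Module.finrank ℝ (LinearMap.ker Q.mulVecLin) = 1 := by
    have : Q.rank = Module.finrank ℝ (LinearMap.range Q.mulVecLin) := rfl
    omega
  -- pick a nonzero kernel vector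
  have hkerne : LinearMap.ker Q.mulVecLin ≠ ⊥ := by
    intro h; rw [h] at hker; simp at hker
  obtain ⟨v, hvmem, hv0⟩ := Submodule.exists_mem_ne_zero_of_ne_bot hkerne
  have hvne : (⟨v, hvmem⟩ : LinearMap.ker Q.mulVecLin) ≠ 0 := by
    simpa using hv0
  have hQv : Q *ᵥ v = 0 := hvmem
  -- M commutes with P, hence preserves the kernel of Q
  have hcomm : M * P = P * M := (Commute.refl M).exp_right
  have hMv_mem : M *ᵥ v ∈ LinearMap.ker Q.mulVecLin := by
    have : Q *ᵥ (M *ᵥ v) = 0 := by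
      rw [Matrix.mulVec_mulVec]
      have : Q * M = M * Q := by
        simp only [hQ, add_mul, mul_add, mul_one, one_mul, hcomm]
      rw [this, ← Matrix.mulVec_mulVec, hQv, Matrix.mulVec_zero]
    simpa [Matrix.mulVecLin_apply] using this
  -- so `v` is an eigenvector of `M`
  obtain ⟨c, hc⟩ := (finrank_eq_one_iff_of_nonzero'
    (⟨v, hvmem⟩ : LinearMap.ker Q.mulVecLin) hvne).mp hker ⟨M *ᵥ v, hMv_mem⟩
  have hMv : M *ᵥ v = c • v := by
    have := congrArg Subtype.val hc
    simpa using this.symm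
  -- hence `exp c • v = -v`
  have hexp : NormedSpace.exp M *ᵥ v = Real.exp c • v := exp_mulVec_eigen M v c hMv
  have hPv : P *ᵥ v = -v := by
    have : P *ᵥ v + v = 0 := by
      simpa [hQ, Matrix.add_mulVec, Matrix.one_mulVec] using hQv
    linear_combination (norm := module) this
  rw [hexp] at hPv
  obtain ⟨i, hi⟩ := Function.ne_iff.mp hv0
  have : Real.exp c * v i = -v i := by
    have := congrFun hPv i
    simpa [Pi.smul_apply, smul_eq_mul] using this
  have hec : Real.exp c = -1 := by
    have h2 : Real.exp c * v i = (-1) * v i := by linarith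
    exact mul_right_cancel₀ hi h2
  linarith [Real.exp_pos c]
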